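/- Define G_n^m = ∫_{−1}^{1} (1 − x²)^{(m−1)/2} P_n^m(x) dx for integers 0 ≤ m ≤ n. Then for all integers 0 ≤ m ≤ n − 1: G_{n+1}^m = ((n² − m²)/((n+1)² − m²)) · G_{n−1}^m. -/

import Mathlib

open MeasureTheory

/-- The Legendre polynomial via the Rodrigues formula
`P_n(x) = (1/(2^n n!)) dⁿ/dxⁿ (x² − 1)ⁿ`. -/
noncomputable def legendreP (n : ℕ) (x : ℝ) : ℝ :=
  (1 / ((2 : ℝ) ^ n * Nat.factorial n)) * iteratedDeriv n (fun y : ℝ => (y ^ 2 - 1) ^ n) x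

/-- The associated Legendre function on `(−1,1)`:
`P_n^m(x) = (−1)^m (1 − x²)^{m/2} dᵐ/dxᵐ P_n(x)`. -/
noncomputable def assocLegendreP (n m : ℕ) (x : ℝ) : ℝ :=
  (-1 : ℝ) ^ m * (1 - x ^ 2) ^ ((m : ℝ) / 2) * iteratedDeriv m (legendreP n) x

/-- `G_n^m = ∫_{−1}^{1} (1 − x²)^{(m−1)/2} P_n^m(x) dx`. -/
noncomputable def Gint (n m : ℕ) : ℝ :=
  ∫ x in (-1 : ℝ)..1, (1 - x ^ 2) ^ (((m : ℝ) - 1) / 2) * assocLegendreP n m x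


section Aux
open Polynomial

noncomputable def legPoly (n : ℕ) : Polynomial ℝ :=
  C (1 / ((2 : ℝ) ^ n * Nat.factorial n)) * derivative^[n] ((X ^ 2 - 1) ^ n)

-- Leibniz, one X factor
lemma LX (j : ℕ) (p : Polynomial ℝ) :
    derivative^[j + 1] (X * p)
      = X * derivative^[j + 1] p + ((j : Polynomial ℝ) + 1) * derivative^[j] p := by
  induction j generalizing p with
  | zero => simp [derivative_mul]; ring
  | succ j ih =>
    rw [Function.iterate_succ_apply', ih]
    simp only [derivative_add, derivative_mul, derivative_X, derivative_natCast, derivative_one,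
      ← Function.iterate_succ_apply' derivative]
    push_cast
    ring

-- Leibniz, (X^2-1) factor
lemma LQ (j : ℕ) (p : Polynomial ℝ) :
    derivative^[j + 2] ((X ^ 2 - 1) * p)
      = (X ^ 2 - 1) * derivative^[j + 2] p
        + (2 * ((j : Polynomial ℝ) + 2)) * (X * derivative^[j + 1] p)
        + (((j : Polynomial ℝ) + 2) * ((j : Polynomial ℝ) + 1)) * derivative^[j] p := by
  induction j generalizing p with
  | zero =>
    show derivative (derivative ((X ^ 2 - 1) * p)) = _
    simp only [derivative_mul, derivative_add, derivative_sub, derivative_one, derivative_X,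
      derivative_pow, derivative_ofNat, derivative_zero, map_one, C_1, Nat.cast_ofNat, map_ofNat,
      pow_one, Nat.cast_zero, Nat.cast_one, Function.iterate_succ_apply',
      Function.iterate_zero_apply, Function.iterate_one]
    norm_num
    push_cast
    ring
  | succ j ih =>
    rw [Function.iterate_succ_apply', ih]
    simp only [derivative_add, derivative_mul, derivative_sub, derivative_one, derivative_X,
      derivative_pow, derivative_natCast, derivative_ofNat, Nat.cast_ofNat, map_ofNat, pow_one,
      ← Function.iterate_succ_apply' derivative]
    push_cast
    ring

lemma iterate_derivative_const_mul {c : Polynomial ℝ} (hc : derivative c = 0)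
    (n : ℕ) (p : Polynomial ℝ) :
    derivative^[n] (c * p) = c * derivative^[n] p := by
  induction n generalizing p with
  | zero => simp
  | succ n ih =>
    rw [Function.iterate_succ_apply, Function.iterate_succ_apply, derivative_mul, hc, zero_mul,
      zero_add, ih]

lemma dW (k : ℕ) :
    derivative (((X : Polynomial ℝ) ^ 2 - 1) ^ (k + 1))
      = (2 * ((k : Polynomial ℝ) + 1)) * (X * ((X ^ 2 - 1) ^ k)) := by
  rw [derivative_pow]
  simp only [derivative_sub, derivative_one, derivative_X_pow, C_eq_natCast]
  push_cast
  ring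

lemma dconst (k : ℕ) : derivative ((k : Polynomial ℝ)) = 0 := by
  simp

-- (X²−1) · D^{k+2} W_{k+1} = (k+1)(k+2) · D^k W_{k+1}
lemma L3 (k : ℕ) :
    (X ^ 2 - 1) * derivative^[k + 2] (((X : Polynomial ℝ) ^ 2 - 1) ^ (k + 1))
      = (((k : Polynomial ℝ) + 1) * ((k : Polynomial ℝ) + 2))
          * derivative^[k] (((X : Polynomial ℝ) ^ 2 - 1) ^ (k + 1)) := by
  have I0 : ((X : Polynomial ℝ) ^ 2 - 1) * derivative (((X : Polynomial ℝ) ^ 2 - 1) ^ (k + 1))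
      = (2 * ((k : Polynomial ℝ) + 1)) * (X * ((X ^ 2 - 1) ^ (k + 1))) := by
    rw [dW]; ring
  cases k with
  | zero =>
    have h2 : derivative^[0 + 2] (((X : Polynomial ℝ) ^ 2 - 1) ^ (0 + 1)) = 2 := by
      show derivative (derivative _) = _
      simp [derivative_sub, derivative_X_pow, map_ofNat]
      norm_num
    rw [h2]
    norm_num
    ring
  | succ j =>
    have hc : derivative (2 * (((j + 1 : ℕ) : Polynomial ℝ) + 1)) = 0 := by simp
    have I1 := congrArg (derivative^[j + 2]) I0
    rw [LQ j (derivative (((X : Polynomial ℝ) ^ 2 - 1) ^ (j + 1 + 1))),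
      iterate_derivative_const_mul hc, LX (j + 1)] at I1
    rw [← Function.iterate_succ_apply derivative (j + 2),
      ← Function.iterate_succ_apply derivative (j + 1),
      ← Function.iterate_succ_apply derivative j] at I1
    -- I1 : (X²−1) D^{j+3} W + 2(j+2) X D^{j+2} W + (j+2)(j+1) D^{j+1} W
    --      = 2(j+2) (X D^{j+2} W + (j+2) D^{j+1} W)
    simp only [Nat.succ_eq_add_one] at I1
    rw [show j + 2 + 1 = j + 1 + 2 by omega] at I1
    push_cast at I1 ⊢
    linear_combination I1

lemma c_succ (n : ℕ) :
    (1 / ((2 : ℝ) ^ (n + 1) * (Nat.factorial (n + 1)))) * (2 * ((n : ℝ) + 1))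
      = 1 / ((2 : ℝ) ^ n * Nat.factorial n) := by
  have h1 : (Nat.factorial (n + 1) : ℝ) = ((n : ℝ) + 1) * Nat.factorial n := by
    rw [Nat.factorial_succ]; push_cast; ring
  have h2 : (Nat.factorial n : ℝ) ≠ 0 := Nat.cast_ne_zero.2 (Nat.factorial_ne_zero n)
  have h3 : ((n : ℝ) + 1) ≠ 0 := by positivity
  rw [h1]
  field_simp [h1]
  ring

lemma cpoly (n : ℕ) :
    C ((1 : ℝ) / ((2 : ℝ) ^ (n + 1) * (Nat.factorial (n + 1)))) * (2 * ((n : Polynomial ℝ) + 1))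
      = C ((1 : ℝ) / ((2 : ℝ) ^ n * Nat.factorial n)) := by
  have h : (2 * ((n : Polynomial ℝ) + 1)) = C (2 * ((n : ℝ) + 1)) := by
    simp [map_mul, map_add, map_ofNat, C_1, C_eq_natCast]
  rw [h, ← C_mul, c_succ]

lemma B0 (n : ℕ) :
    derivative (legPoly (n + 1))
      = X * derivative (legPoly n) + ((n : Polynomial ℝ) + 1) * legPoly n := by
  have hc2 : derivative (2 * ((n : Polynomial ℝ) + 1)) = 0 := by simp
  unfold legPoly
  rw [derivative_C_mul, derivative_C_mul,
    ← Function.iterate_succ_apply' derivative (n + 1),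
    ← Function.iterate_succ_apply' derivative n ((X ^ 2 - 1) ^ n),
    Function.iterate_succ_apply derivative (n + 1),
    dW n, iterate_derivative_const_mul hc2, LX n]
  have hcp := cpoly n
  linear_combination (X * derivative^[n + 1] ((X ^ 2 - 1) ^ n)
      + ((n : Polynomial ℝ) + 1) * derivative^[n] ((X ^ 2 - 1) ^ n)) * hcp

lemma A0 (n : ℕ) :
    X * derivative (legPoly (n + 1)) - derivative (legPoly n)
      = ((n : Polynomial ℝ) + 1) * legPoly (n + 1) := by
  cases n with
  | zero =>
    unfold legPoly
    norm_num
    ring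
  | succ j =>
    have hB := B0 (j + 1)
    have hL3 := L3 j
    have hE := LQ j (((X : Polynomial ℝ) ^ 2 - 1) ^ (j + 1))
    rw [show (((X : Polynomial ℝ) ^ 2 - 1) * ((X ^ 2 - 1) ^ (j + 1))) = (X ^ 2 - 1) ^ (j + 2) from
      (pow_succ' _ _).symm] at hE
    have hcp := cpoly (j + 1)
    -- unfold legPoly in goal and hB
    unfold legPoly at hB ⊢
    rw [derivative_C_mul, derivative_C_mul,
      ← Function.iterate_succ_apply' derivative (j + 2),
      ← Function.iterate_succ_apply' derivative (j + 1) ((X ^ 2 - 1) ^ (j + 1))] at hB ⊢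
    push_cast at hB hL3 hE hcp ⊢
    linear_combination X * hB
      - (((j : Polynomial ℝ) + 2) * C ((1:ℝ) / (2 ^ (j + 2) * (Nat.factorial (j + 2))))) * hE
      + (((j : Polynomial ℝ) + 2) * C ((1:ℝ) / (2 ^ (j + 2) * (Nat.factorial (j + 2))))) * hL3
      - ((X ^ 2 - 1) * derivative^[j + 2] ((X ^ 2 - 1) ^ (j + 1))
          + ((j : Polynomial ℝ) + 2) * X * derivative^[j + 1] ((X ^ 2 - 1) ^ (j + 1))) * hcp

lemma Am (m n : ℕ) :
    X * derivative^[m + 1] (legPoly (n + 1)) - derivative^[m + 1] (legPoly n)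
      = (((n : Polynomial ℝ) + 1) - (m : Polynomial ℝ)) * derivative^[m] (legPoly (n + 1)) := by
  induction m with
  | zero =>
    simpa using A0 n
  | succ m ih =>
    have ih' := congrArg derivative ih
    simp only [derivative_sub, derivative_mul, derivative_X, derivative_natCast, derivative_one,
      derivative_add, zero_mul, zero_add, one_mul, zero_sub, sub_zero, neg_zero,
      ← Function.iterate_succ_apply' derivative] at ih'
    push_cast at ih' ⊢
    linear_combination ih'

lemma Bm (m n : ℕ) :
    derivative^[m + 1] (legPoly (n + 1)) - X * derivative^[m + 1] (legPoly n)
      = (((n : Polynomial ℝ) + 1) + (m : Polynomial ℝ)) * derivative^[m] (legPoly n) := by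
  induction m with
  | zero =>
    simp only [zero_add, Function.iterate_one, Nat.cast_zero, add_zero,
      Function.iterate_zero_apply]
    linear_combination B0 n
  | succ m ih =>
    have ih' := congrArg derivative ih
    simp only [derivative_sub, derivative_mul, derivative_X, derivative_natCast, derivative_one,
      derivative_add, zero_mul, zero_add, one_mul, zero_sub, sub_zero, neg_zero,
      ← Function.iterate_succ_apply' derivative] at ih'
    push_cast at ih' ⊢
    linear_combination ih'

-- KEY identity, centered at N = n+1:
-- (2N+1)·((2m+1)·X·D^m P_N − (1−X²)·D^{m+1} P_N)
--   = ((N+1)²−m²)·D^m P_{N+1} − (N²−m²)·D^m P_{N−1}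
lemma key (m n : ℕ) :
    (2 * ((n : Polynomial ℝ) + 1) + 1) *
        ((2 * (m : Polynomial ℝ) + 1) * (X * derivative^[m] (legPoly (n + 1)))
          - (1 - X ^ 2) * derivative^[m + 1] (legPoly (n + 1)))
      = ((((n : Polynomial ℝ) + 2) ^ 2 - (m : Polynomial ℝ) ^ 2) * derivative^[m] (legPoly (n + 2))
        - ((((n : Polynomial ℝ) + 1)) ^ 2 - (m : Polynomial ℝ) ^ 2) * derivative^[m] (legPoly n)) := by
  have hA1 := Am m n
  have hB1 := Bm m n
  have hA2 := Am m (n + 1)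
  have hB2 := Bm m (n + 1)
  push_cast at hA1 hB1 hA2 hB2 ⊢
  -- KEY = (m−N)·B1 + (N−m)·X·A1 + (N+m+1)·A2 − (N+m+1)·X·B2, N = n+1
  linear_combination ((m : Polynomial ℝ) - ((n : Polynomial ℝ) + 1)) * hB1
    + (((n : Polynomial ℝ) + 1) - (m : Polynomial ℝ)) * X * hA1
    + (((n : Polynomial ℝ) + 1) + (m : Polynomial ℝ) + 1) * hA2
    - (((n : Polynomial ℝ) + 1) + (m : Polynomial ℝ) + 1) * X * hB2

lemma iteratedDeriv_eval (p : Polynomial ℝ) (k : ℕ) :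
    iteratedDeriv k (fun x => p.eval x) = fun x => (derivative^[k] p).eval x := by
  induction k with
  | zero => simp
  | succ k ih =>
    rw [iteratedDeriv_succ, ih, Function.iterate_succ_apply']
    funext x
    exact Polynomial.deriv (derivative^[k] p)

lemma legendreP_eq (n : ℕ) : legendreP n = fun x => (legPoly n).eval x := by
  funext x
  unfold legendreP legPoly
  have : (fun y : ℝ => (y ^ 2 - 1) ^ n) = fun y => (((X : Polynomial ℝ) ^ 2 - 1) ^ n).eval y := by
    funext y; simp
  rw [this, iteratedDeriv_eval]
  simp

lemma iteratedDeriv_legendreP (n m : ℕ) :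
    iteratedDeriv m (legendreP n) = fun x => (derivative^[m] (legPoly n)).eval x := by
  rw [legendreP_eq, iteratedDeriv_eval]

open MeasureTheory in
set_option maxHeartbeats 1000000 in
lemma II (m : ℕ) (p : Polynomial ℝ) :
    IntervalIntegrable
      (fun x => (1 - x ^ 2) ^ (((m : ℝ) - 1) / 2)
          * ((-1 : ℝ) ^ m * (1 - x ^ 2) ^ ((m : ℝ) / 2) * p.eval x))
      volume (-1) 1 := by
  obtain ⟨C, hC⟩ := (isCompact_Icc (a := (-1 : ℝ)) (b := 1)).exists_bound_of_continuousOn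
    (p.continuous.continuousOn)
  have hC0 : 0 ≤ C := le_trans (norm_nonneg _) (hC 0 (by norm_num))
  set f : ℝ → ℝ := fun x => (1 - x ^ 2) ^ (((m : ℝ) - 1) / 2)
      * ((-1 : ℝ) ^ m * (1 - x ^ 2) ^ ((m : ℝ) / 2) * p.eval x) with hf
  set g : ℝ → ℝ := fun x => C * ((1 - x) ^ ((-1/2 : ℝ)) + (1 + x) ^ ((-1/2 : ℝ))) with hg
  have hrint : IntervalIntegrable (fun x : ℝ => x ^ ((-1/2 : ℝ))) volume 0 2 :=
    intervalIntegral.intervalIntegrable_rpow' (by norm_num)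
  have h1 : IntervalIntegrable (fun x : ℝ => (1 - x) ^ ((-1/2 : ℝ))) volume (-1) 1 := by
    have := (hrint.comp_sub_left 1).symm
    norm_num at this
    convert this using 2 with x
    norm_num
  have h2 : IntervalIntegrable (fun x : ℝ => (1 + x) ^ ((-1/2 : ℝ))) volume (-1) 1 := by
    have := hrint.comp_add_left 1
    norm_num at this
    convert this using 2 with x
    norm_num
  have hgint : IntervalIntegrable g volume (-1) 1 := ((h1.add h2).const_mul C)
  have huIoc : Set.uIoc (-1 : ℝ) 1 = Set.Ioc (-1 : ℝ) 1 := Set.uIoc_of_le (by norm_num)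
  have hrestrict : volume.restrict (Set.uIoc (-1 : ℝ) 1) = volume.restrict (Set.Ioo (-1 : ℝ) 1) := by
    rw [huIoc]
    exact (Measure.restrict_congr_set Ioo_ae_eq_Ioc).symm
  apply hgint.mono_fun'
  · -- measurability
    rw [hrestrict]
    apply ContinuousOn.aestronglyMeasurable _ measurableSet_Ioo
    intro x hx
    have hne : (1 - x ^ 2) ≠ 0 := by
      obtain ⟨hx1, hx2⟩ := hx
      nlinarith
    have hb : ContinuousAt (fun x : ℝ => 1 - x ^ 2) x := by fun_prop
    exact ((hb.rpow_const (Or.inl hne)).mul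
      (((continuousAt_const (y := (-1:ℝ)^m)).mul (hb.rpow_const (Or.inl hne))).mul
        (p.continuous.continuousAt))).continuousWithinAt
  · -- bound
    have hne1 : ∀ᵐ x ∂(volume.restrict (Set.uIoc (-1 : ℝ) 1)), x ≠ 1 :=
      ae_restrict_of_ae (by simp [ae_iff, Set.setOf_eq_eq_singleton'] : ∀ᵐ (x : ℝ) ∂volume, x ≠ 1)
    filter_upwards [ae_restrict_mem measurableSet_uIoc, hne1] with x hxm hx1
    rw [huIoc] at hxm
    have hx : x ∈ Set.Ioo (-1 : ℝ) 1 := ⟨hxm.1, lt_of_le_of_ne hxm.2 hx1⟩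
    obtain ⟨hxa, hxb⟩ := hx
    have hu : 0 < 1 - x ^ 2 := by nlinarith
    have h1x : (0:ℝ) < 1 - x := by linarith
    have h2x : (0:ℝ) < 1 + x := by linarith
    have hA : (0:ℝ) ≤ (1 - x ^ 2) ^ (((m : ℝ) - 1) / 2) := (Real.rpow_pos_of_pos hu _).le
    have hB : (0:ℝ) ≤ (1 - x ^ 2) ^ ((m : ℝ) / 2) := (Real.rpow_pos_of_pos hu _).le
    have heval : |p.eval x| ≤ C := by
      have := hC x (Set.mem_Icc.2 ⟨hxa.le, hxb.le⟩)
      rwa [Real.norm_eq_abs] at this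
    have hABle : (1 - x ^ 2) ^ (((m : ℝ) - 1) / 2) * (1 - x ^ 2) ^ ((m : ℝ) / 2)
        ≤ (1 - x) ^ ((-1/2 : ℝ)) * (1 + x) ^ ((-1/2 : ℝ)) := by
      rw [← Real.rpow_add hu]
      have hmerge : (1 - x ^ 2) ^ ((((m : ℝ) - 1) / 2) + ((m : ℝ) / 2))
          ≤ (1 - x ^ 2) ^ ((-1/2 : ℝ)) := by
        apply Real.rpow_le_rpow_of_exponent_ge hu (by nlinarith)
        have : (0:ℝ) ≤ (m : ℝ) := Nat.cast_nonneg m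
        linarith
      refine hmerge.trans_eq ?_
      rw [show (1 - x ^ 2) = (1 - x) * (1 + x) by ring, Real.mul_rpow h1x.le h2x.le]
    have hab : (1 - x) ^ ((-1/2 : ℝ)) * (1 + x) ^ ((-1/2 : ℝ))
        ≤ (1 - x) ^ ((-1/2 : ℝ)) + (1 + x) ^ ((-1/2 : ℝ)) := by
      have ha : (0:ℝ) < (1 - x) ^ ((-1/2 : ℝ)) := Real.rpow_pos_of_pos h1x _
      have hb : (0:ℝ) < (1 + x) ^ ((-1/2 : ℝ)) := Real.rpow_pos_of_pos h2x _
      rcases le_total 0 x with hx0 | hx0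
      · have : (1 + x) ^ ((-1/2 : ℝ)) ≤ 1 :=
          Real.rpow_le_one_of_one_le_of_nonpos (by linarith) (by norm_num)
        nlinarith
      · have : (1 - x) ^ ((-1/2 : ℝ)) ≤ 1 :=
          Real.rpow_le_one_of_one_le_of_nonpos (by linarith) (by norm_num)
        nlinarith
    have habs : ‖f x‖ = (1 - x ^ 2) ^ (((m : ℝ) - 1) / 2)
        * ((1 - x ^ 2) ^ ((m : ℝ) / 2) * |p.eval x|) := by
      rw [hf, Real.norm_eq_abs, abs_mul, abs_mul, abs_mul, abs_pow, abs_neg, abs_one, one_pow,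
        one_mul, abs_of_nonneg hA, abs_of_nonneg hB]
    rw [habs, hg]
    have hstep : (1 - x ^ 2) ^ (((m : ℝ) - 1) / 2) * ((1 - x ^ 2) ^ ((m : ℝ) / 2) * |p.eval x|)
        ≤ ((1 - x) ^ ((-1/2 : ℝ)) * (1 + x) ^ ((-1/2 : ℝ))) * C := by
      rw [← mul_assoc]
      exact mul_le_mul hABle heval (abs_nonneg _) (by positivity)
    refine hstep.trans ?_
    have ha : (0:ℝ) < (1 - x) ^ ((-1/2 : ℝ)) := Real.rpow_pos_of_pos h1x _
    have hb : (0:ℝ) < (1 + x) ^ ((-1/2 : ℝ)) := Real.rpow_pos_of_pos h2x _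
    nlinarith [mul_le_mul_of_nonneg_right hab hC0]


/- For `0 ≤ m ≤ n − 1`: `G_{n+1}^m = ((n² − m²)/((n+1)² − m²))·G_{n−1}^m`. -/
open MeasureTheory intervalIntegral in
set_option maxHeartbeats 1000000 in
/-- For `0 ≤ m ≤ n − 1`: `G_{n+1}^m = ((n² − m²)/((n+1)² − m²))·G_{n−1}^m`. -/
theorem Gint_recurrence (m n : ℕ) (hmn : m + 1 ≤ n) :
    Gint (n + 1) m
      = (((n : ℝ) ^ 2 - (m : ℝ) ^ 2) / (((n : ℝ) + 1) ^ 2 - (m : ℝ) ^ 2)) * Gint (n - 1) m := by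
  obtain ⟨k, rfl⟩ : ∃ k, n = k + 1 := ⟨n - 1, by omega⟩
  have hm : m ≤ k := by omega
  have hsub : k + 1 - 1 = k := rfl
  rw [hsub]
  set p1 := derivative^[m] (legPoly (k + 2)) with hp1
  set p0 := derivative^[m] (legPoly k) with hp0
  set q := derivative^[m] (legPoly (k + 1)) with hq
  set c1 : ℝ := ((k : ℝ) + 2) ^ 2 - (m : ℝ) ^ 2 with hc1
  set c0 : ℝ := ((k : ℝ) + 1) ^ 2 - (m : ℝ) ^ 2 with hc0
  set f1 : ℝ → ℝ := fun x => (1 - x ^ 2) ^ (((m : ℝ) - 1) / 2)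
      * ((-1 : ℝ) ^ m * (1 - x ^ 2) ^ ((m : ℝ) / 2) * p1.eval x) with hf1
  set f0 : ℝ → ℝ := fun x => (1 - x ^ 2) ^ (((m : ℝ) - 1) / 2)
      * ((-1 : ℝ) ^ m * (1 - x ^ 2) ^ ((m : ℝ) / 2) * p0.eval x) with hf0
  have hG1 : Gint (k + 2) m = ∫ x in (-1 : ℝ)..1, f1 x := by
    unfold Gint assocLegendreP
    simp only [iteratedDeriv_legendreP, hf1, hp1]
  have hG0 : Gint k m = ∫ x in (-1 : ℝ)..1, f0 x := by
    unfold Gint assocLegendreP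
    simp only [iteratedDeriv_legendreP, hf0, hp0]
  set F : ℝ → ℝ := fun x => (-1 : ℝ) ^ m * (-(2 * (k : ℝ) + 3))
      * ((1 - x ^ 2) ^ ((2 * (m : ℝ) + 1) / 2) * q.eval x) with hF
  set h : ℝ → ℝ := fun x => c1 * f1 x - c0 * f0 x with hh
  have hderiv : ∀ x ∈ Set.Ioo (-1 : ℝ) 1, HasDerivAt F (h x) x := by
    intro x hx
    obtain ⟨hxa, hxb⟩ := hx
    have hu : (0 : ℝ) < 1 - x ^ 2 := by nlinarith
    have hbase : HasDerivAt (fun x : ℝ => 1 - x ^ 2) (-(2 * x)) x := by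
      simpa using ((hasDerivAt_pow 2 x).const_sub 1)
    have hrpow := hbase.rpow_const (p := (2 * (m : ℝ) + 1) / 2) (Or.inl hu.ne')
    have hqd : HasDerivAt (fun y : ℝ => q.eval y) ((derivative q).eval x) x := q.hasDerivAt x
    have hFd := (hrpow.mul hqd).const_mul ((-1 : ℝ) ^ m * (-(2 * (k : ℝ) + 3)))
    refine hFd.congr_deriv (Eq.symm ?_)
    have e1 : (1 - x ^ 2) ^ ((2 * (m : ℝ) + 1) / 2 - 1)
        = (1 - x ^ 2) ^ (((m : ℝ) - 1) / 2) * (1 - x ^ 2) ^ ((m : ℝ) / 2) := by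
      rw [← Real.rpow_add hu]
      congr 1
      ring
    have e2 : (1 - x ^ 2) ^ ((2 * (m : ℝ) + 1) / 2)
        = ((1 - x ^ 2) ^ (((m : ℝ) - 1) / 2) * (1 - x ^ 2) ^ ((m : ℝ) / 2)) * (1 - x ^ 2) := by
      rw [← e1, ← Real.rpow_add_one hu.ne']
      congr 1
      ring
    have hkey := congrArg (Polynomial.eval x) (key m k)
    simp only [Polynomial.eval_mul, Polynomial.eval_add, Polynomial.eval_sub, Polynomial.eval_pow,
      Polynomial.eval_X, Polynomial.eval_one, Polynomial.eval_ofNat, Polynomial.eval_natCast,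
      Function.iterate_succ_apply', ← hq, ← hp1, ← hp0] at hkey
    push_cast at hkey
    rw [hh, hf1, hf0, hc1, hc0, e2, e1]
    linear_combination (-(-1 : ℝ) ^ m * (1 - x ^ 2) ^ (((m : ℝ) - 1) / 2)
      * (1 - x ^ 2) ^ ((m : ℝ) / 2)) * hkey
  have hcont : ContinuousOn F (Set.Icc (-1 : ℝ) 1) := by
    apply Continuous.continuousOn
    apply Continuous.mul continuous_const
    apply Continuous.mul _ q.continuous
    exact ((continuous_const.sub (continuous_pow 2)).rpow_const
      (fun x => Or.inr (by positivity)))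
  have hI1 : IntervalIntegrable f1 volume (-1) 1 := II m p1
  have hI0 : IntervalIntegrable f0 volume (-1) 1 := II m p0
  have hIh : IntervalIntegrable h volume (-1) 1 := (hI1.const_mul c1).sub (hI0.const_mul c0)
  have hFTC := integral_eq_sub_of_hasDeriv_right_of_le (by norm_num : (-1 : ℝ) ≤ 1)
    hcont (fun x hx => (hderiv x hx).hasDerivWithinAt) hIh
  have hF1 : F 1 = 0 := by
    rw [hF]
    norm_num
    rw [Real.zero_rpow (by positivity)]
    norm_num
  have hFm1 : F (-1) = 0 := by
    rw [hF]
    norm_num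
    rw [Real.zero_rpow (by positivity)]
    norm_num
  rw [hF1, hFm1, sub_zero] at hFTC
  have hsplit : (∫ x in (-1 : ℝ)..1, h x) = c1 * (∫ x in (-1 : ℝ)..1, f1 x)
      - c0 * (∫ x in (-1 : ℝ)..1, f0 x) := by
    rw [hh]
    rw [integral_sub (hI1.const_mul c1) (hI0.const_mul c0),
      intervalIntegral.integral_const_mul, intervalIntegral.integral_const_mul]
  have hmain : c1 * Gint (k + 2) m = c0 * Gint k m := by
    rw [hG1, hG0]
    have := hsplit.symm.trans hFTC
    linarith
  have hc1ne : c1 ≠ 0 := by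
    rw [hc1]
    have : (m : ℝ) ≤ k := Nat.cast_le.2 hm
    nlinarith
  show Gint (k + 2) m = _
  push_cast
  rw [div_mul_eq_mul_div, eq_div_iff (fun h0 => hc1ne (by rw [hc1]; linear_combination h0))]
  push_cast at hmain
  linear_combination hmain

end Aux
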